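/- Let G be a finite abelian (additive) group, S a finite set, f_0 : G → S an injective function, u ∈ G, and define f_1 : G → S by f_1(x) = f_0(x - u) (so that f_1(x + u) = f_0(x) for all x). Then for every complex-valued additive character χ of G and every sign ε ∈ {+1, -1}: Σ_{s ∈ S} | (Σ_{x ∈ G, f_0(x) = s} χ(x)) + ε · (Σ_{x ∈ G, f_1(x) = s} χ(x)) |² = |G| · |1 + ε·χ(u)|², where |·| on complex numbers is the complex absolute value. -/

import Mathlib

open Finset

/-- Fourier sampling analysis for hidden translation: with `f₁(x+u) = f₀(x)`
and `f₀` injective, for every additive character `χ` of the finite abelian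
group `G` and every sign `ε = ±1`,
`∑_s |∑_{f₀(x)=s} χ(x) + ε ∑_{f₁(x)=s} χ(x)|² = |G| · |1 + ε χ(u)|²`. -/
theorem fourier_sampling_identity {G : Type*} [AddCommGroup G] [Fintype G]
    {S : Type*} [Fintype S] [DecidableEq S]
    (f₀ f₁ : G → S) (hinj : Function.Injective f₀) (u : G)
    (hf : ∀ x : G, f₁ (x + u) = f₀ x)
    (χ : AddChar G ℂ) (ε : ℂ) (hε : ε = 1 ∨ ε = -1) :
    ∑ s : S, ‖(∑ x ∈ univ.filter fun x => f₀ x = s, χ x) +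
          ε * ∑ x ∈ univ.filter fun x => f₁ x = s, χ x‖ ^ 2 =
      (Fintype.card G : ℝ) * ‖1 + ε * χ u‖ ^ 2 := by
  have hf1 : ∀ x : G, f₁ x = f₀ (x - u) := fun x => by
    simpa using hf (x - u)
  have habs : ∀ x : G, ‖χ x‖ = 1 := by
    intro x
    have h1 : χ x ^ Fintype.card G = 1 := by
      rw [← AddChar.map_nsmul_eq_pow, card_nsmul_eq_zero, AddChar.map_zero_eq_one]
    have h2 : ‖χ x‖ ^ Fintype.card G = 1 := by
      rw [← norm_pow, h1, norm_one]
    have := pow_left_strictMonoOn₀ (M₀ := ℝ) (n := Fintype.card G)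
      Fintype.card_ne_zero |>.injOn
    exact this (Set.mem_setOf.2 (norm_nonneg _))
      (Set.mem_setOf.2 zero_le_one) (by simpa using h2)
  have hsub : (univ.image f₀ : Finset S) ⊆ univ := Finset.subset_univ _
  have hvanish : ∀ s ∈ (univ : Finset S), s ∉ univ.image f₀ →
      ‖(∑ x ∈ univ.filter fun x => f₀ x = s, χ x) +
          ε * ∑ x ∈ univ.filter fun x => f₁ x = s, χ x‖ ^ 2 = 0 := by
    intro s _ hs
    simp only [Finset.mem_image, Finset.mem_univ, true_and, not_exists] at hs
    have h0 : (univ.filter fun x => f₀ x = s) = ∅ := by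
      apply Finset.filter_eq_empty_iff.2
      intro x _; exact hs x
    have h1 : (univ.filter fun x => f₁ x = s) = ∅ := by
      apply Finset.filter_eq_empty_iff.2
      intro x _; rw [hf1]; exact hs (x - u)
    simp [h0, h1]
  rw [← Finset.sum_subset hsub hvanish,
    Finset.sum_image (fun x _ y _ h => hinj h)]
  have hterm : ∀ x₀ : G,
      ‖(∑ x ∈ univ.filter fun x => f₀ x = f₀ x₀, χ x) +
          ε * ∑ x ∈ univ.filter fun x => f₁ x = f₀ x₀, χ x‖ ^ 2 =
      ‖1 + ε * χ u‖ ^ 2 := by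
    intro x₀
    have h0 : (univ.filter fun x => f₀ x = f₀ x₀) = {x₀} := by
      ext x; simp [hinj.eq_iff]
    have h1 : (univ.filter fun x => f₁ x = f₀ x₀) = {x₀ + u} := by
      ext x
      simp [hf1, hinj.eq_iff, sub_eq_iff_eq_add]
    rw [h0, h1, Finset.sum_singleton, Finset.sum_singleton,
      AddChar.map_add_eq_mul]
    have : χ x₀ + ε * (χ x₀ * χ u) = χ x₀ * (1 + ε * χ u) := by ring
    rw [this, norm_mul, habs, one_mul]
  simp only [hterm, Finset.sum_const, Finset.card_univ, nsmul_eq_mul]
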